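/- Let K be a simplicial complex over ℤ/2 and σ ∈ K a simplex with no proper cofaces in K (so K∖{σ} is a complex). If σ is contained in some cycle of K, then σ is not contained in any boundary of K, and the inclusion-induced map H(K∖{σ}) → H(K) is injective but not surjective. -/
import Mathlib


/-- A simplex is a finite set of (natural-number) vertices. -/
abbrev Simplex : Type := Finset ℕ

/-- A chain over ℤ/2 (all degrees together) is a finitely supported
function from simplices to ℤ/2. -/
abbrev Chain : Type := Simplex →₀ ZMod 2

/-- A (finite) simplicial complex: a finite set of simplices closed under faces. -/
def IsComplex (K : Finset Simplex) : Prop := ∀ s ∈ K, ∀ t ⊆ s, t ∈ K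

/-- Boundary of a single simplex over ℤ/2. -/
noncomputable def bdrySimplex (s : Simplex) : Chain :=
  ∑ x ∈ s, Finsupp.single (s.erase x) 1

/-- The boundary operator on chains (all degrees), over ℤ/2. -/
noncomputable def bdry : Chain →ₗ[ZMod 2] Chain :=
  Finsupp.lsum (ZMod 2) fun s => LinearMap.toSpanSingleton (ZMod 2) Chain (bdrySimplex s)

/-- The chain group of a complex `K`: chains supported on `K`. -/
noncomputable def chainsOf (K : Finset Simplex) : Submodule (ZMod 2) Chain :=
  Finsupp.supported (ZMod 2) (ZMod 2) (↑K : Set Simplex)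

/-- The cycle group `Z(K)` (all degrees). -/
noncomputable def cyclesOf (K : Finset Simplex) : Submodule (ZMod 2) Chain :=
  chainsOf K ⊓ LinearMap.ker bdry

/-- The boundary group `B(K)` (all degrees). -/
noncomputable def bdriesOf (K : Finset Simplex) : Submodule (ZMod 2) Chain :=
  Submodule.map bdry (chainsOf K)

theorem chainsOf_mono {K K' : Finset Simplex} (h : K ⊆ K') : chainsOf K ≤ chainsOf K' :=
  Finsupp.supported_mono (by exact_mod_cast h)

theorem cyclesOf_mono {K K' : Finset Simplex} (h : K ⊆ K') : cyclesOf K ≤ cyclesOf K' :=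
  inf_le_inf_right _ (chainsOf_mono h)

theorem bdriesOf_mono {K K' : Finset Simplex} (h : K ⊆ K') : bdriesOf K ≤ bdriesOf K' :=
  Submodule.map_mono (chainsOf_mono h)

/-- `B(K)` viewed inside `Z(K)`. -/
noncomputable def homologyRel (K : Finset Simplex) : Submodule (ZMod 2) (cyclesOf K) :=
  (bdriesOf K).comap (cyclesOf K).subtype

/-- The homology `H(K) = Z(K)/B(K)` over ℤ/2, all degrees summed. -/
noncomputable abbrev homology (K : Finset Simplex) :=
  cyclesOf K ⧸ homologyRel K

/-- The inclusion-induced map on homology. -/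
noncomputable def inducedH {K K' : Finset Simplex} (h : K ⊆ K') :
    homology K →ₗ[ZMod 2] homology K' :=
  Submodule.mapQ _ _ (Submodule.inclusion (cyclesOf_mono h)) (by
    intro x hx
    simp only [homologyRel, Submodule.mem_comap, Submodule.coe_subtype,
      Submodule.coe_inclusion] at hx ⊢
    exact bdriesOf_mono h hx)

open Classical in
/-- The homology class of a chain (zero if the chain is not a cycle of `K`). -/
noncomputable def hclass (K : Finset Simplex) (c : Chain) : homology K :=
  if h : c ∈ cyclesOf K then Submodule.Quotient.mk ⟨c, h⟩ else 0


theorem eraseSubset (K : Finset Simplex) (σ : Simplex) : K.erase σ ⊆ K :=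
  fun _ hx => Finset.mem_of_mem_erase hx

section aux

variable {K : Finset Simplex} {σ : Simplex}

lemma aux_addself (c : Chain) : c + c = 0 := by
  have h : ∀ a : ZMod 2, a + a = 0 := by decide
  ext x; simp [h]

lemma aux_neg (c : Chain) : -c = c :=
  neg_eq_of_add_eq_zero_left (aux_addself c)

lemma aux_coeff_bdrySimplex (hmax : ∀ τ ∈ K, σ ⊆ τ → τ = σ) :
    ∀ s ∈ K, bdrySimplex s σ = 0 := by
  intro s hs
  unfold bdrySimplex
  rw [Finsupp.finset_sum_apply]
  apply Finset.sum_eq_zero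
  intro x hx
  rw [Finsupp.single_apply, if_neg]
  intro h
  have hsub : σ ⊆ s := h ▸ Finset.erase_subset x s
  have hse := hmax s hs hsub
  rw [hse] at h
  exact (Finset.erase_eq_self.mp (hse ▸ h)) (hse ▸ hx)

lemma aux_coeff_bdry (hmax : ∀ τ ∈ K, σ ⊆ τ → τ = σ) :
    ∀ d ∈ chainsOf K, bdry d σ = 0 := by
  intro d hd
  have hsupp : ↑d.support ⊆ (↑K : Set Simplex) := Finsupp.mem_supported _ d |>.mp hd
  rw [bdry, Finsupp.lsum_apply, Finsupp.sum_apply]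
  rw [Finsupp.sum]
  apply Finset.sum_eq_zero
  intro s hs
  have hsK : s ∈ K := hsupp hs
  simp [LinearMap.toSpanSingleton_apply, aux_coeff_bdrySimplex hmax s hsK]

lemma aux_part1 (hmax : ∀ τ ∈ K, σ ⊆ τ → τ = σ) :
    ∀ c ∈ bdriesOf K, σ ∉ c.support := by
  rintro c ⟨d, hd, rfl⟩ hc
  exact Finsupp.mem_support_iff.mp hc (aux_coeff_bdry hmax d hd)

lemma aux_bdry_single (s : Simplex) (a : ZMod 2) :
    bdry (Finsupp.single s a) = a • bdrySimplex s := by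
  simp [bdry, LinearMap.toSpanSingleton_apply]

lemma aux_erase_chain {d : Chain} (hd : d ∈ chainsOf K) :
    Finsupp.erase σ d ∈ chainsOf (K.erase σ) := by
  rw [chainsOf, Finsupp.mem_supported, Finsupp.support_erase]
  intro x hx
  rcases Finset.mem_erase.mp hx with ⟨hne, hxd⟩
  have := (Finsupp.mem_supported _ d |>.mp hd) hxd
  exact Finset.mem_coe.mpr (Finset.mem_erase.mpr ⟨hne, this⟩)

lemma aux_one : ∀ {a : ZMod 2}, a ≠ 0 → a = 1 := by decide

lemma aux_bdrySimplex_mem (hz : ∃ z ∈ cyclesOf K, σ ∈ z.support) :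
    bdrySimplex σ ∈ bdriesOf (K.erase σ) := by
  obtain ⟨w, hwc, hws⟩ := hz
  have h1 : w σ = 1 := aux_one (Finsupp.mem_support_iff.mp hws)
  have hdecomp : Finsupp.single σ (w σ) + Finsupp.erase σ w = w :=
    Finsupp.single_add_erase σ w
  have hbw : bdry w = 0 := hwc.2
  have : bdry (Finsupp.single σ (w σ)) + bdry (Finsupp.erase σ w) = 0 := by
    rw [← map_add, hdecomp, hbw]
  rw [aux_bdry_single, h1, one_smul] at this
  have heq : bdry (Finsupp.erase σ w) = bdrySimplex σ := by
    have := neg_eq_of_add_eq_zero_right this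
    rw [aux_neg] at this
    exact this.symm
  exact ⟨Finsupp.erase σ w, aux_erase_chain hwc.1, heq⟩

lemma aux_bdries_le (hz : ∃ z ∈ cyclesOf K, σ ∈ z.support) :
    bdriesOf K ≤ bdriesOf (K.erase σ) := by
  rintro c ⟨d, hd, rfl⟩
  have hdecomp : Finsupp.single σ (d σ) + Finsupp.erase σ d = d :=
    Finsupp.single_add_erase σ d
  have : bdry d = (d σ) • bdrySimplex σ + bdry (Finsupp.erase σ d) := by
    rw [← aux_bdry_single, ← map_add, hdecomp]
  rw [this]
  exact Submodule.add_mem _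
    (Submodule.smul_mem _ _ (aux_bdrySimplex_mem hz))
    ⟨Finsupp.erase σ d, aux_erase_chain hd, rfl⟩

end aux

/-- if `σ` is a maximal simplex of `K` contained in some cycle of `K`,
then `σ` lies in no boundary of `K`, and `H(K∖{σ}) → H(K)` is injective but not
surjective. -/
theorem stmt14 (K : Finset Simplex) (hK : IsComplex K) (σ : Simplex) (hσ : σ ∈ K)
    (hmax : ∀ τ ∈ K, σ ⊆ τ → τ = σ)
    (hz : ∃ z ∈ cyclesOf K, σ ∈ z.support) :
    (∀ c ∈ bdriesOf K, σ ∉ c.support) ∧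
    Function.Injective (inducedH (eraseSubset K σ)) ∧
    ¬ Function.Surjective (inducedH (eraseSubset K σ)) := by
  refine ⟨aux_part1 hmax, ?_, ?_⟩
  · -- injectivity
    rw [injective_iff_map_eq_zero]
    intro x hx
    obtain ⟨⟨z, hzc⟩, rfl⟩ := Submodule.Quotient.mk_surjective _ x
    rw [inducedH, Submodule.mapQ_apply, Submodule.Quotient.mk_eq_zero] at hx
    have hzB : z ∈ bdriesOf K := hx
    have hzB' : z ∈ bdriesOf (K.erase σ) := aux_bdries_le hz hzB
    rw [Submodule.Quotient.mk_eq_zero]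
    exact hzB'
  · -- non-surjectivity
    intro hsurj
    obtain ⟨w, hwc, hws⟩ := hz
    obtain ⟨q, hq⟩ := hsurj (Submodule.Quotient.mk ⟨w, hwc⟩)
    obtain ⟨⟨y, hy⟩, rfl⟩ := Submodule.Quotient.mk_surjective _ q
    rw [inducedH, Submodule.mapQ_apply, Submodule.Quotient.eq] at hq
    have hmem : y - w ∈ bdriesOf K := hq
    have hy0 : y σ = 0 := by
      by_contra h
      have : σ ∈ y.support := Finsupp.mem_support_iff.mpr h
      have hsub := (Finsupp.mem_supported _ y |>.mp hy.1) this
      exact Finset.notMem_erase σ K (Finset.mem_coe.mp hsub)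
    have h1 : w σ = 1 := aux_one (Finsupp.mem_support_iff.mp hws)
    have hcoeff : (y - w) σ ≠ 0 := by
      rw [Finsupp.sub_apply, hy0, h1]
      decide
    exact aux_part1 hmax _ hmem (Finsupp.mem_support_iff.mpr hcoeff)
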